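/- Let K be a compact convex subset of a locally convex Hausdorff real topological vector space, and let f, g : K → (-∞, ∞] be lower semicontinuous affine functions. If f(λ) ≤ g(λ) for every extreme point λ of K, then f ≤ g on all of K. -/

import Mathlib

open Set Filter
open scoped Classical

section LaffAux

variable {E : Type*} [AddCommGroup E] [Module ℝ E]
    [TopologicalSpace E] [IsTopologicalAddGroup E] [ContinuousSMul ℝ E]
    [T2Space E] [LocallyConvexSpace ℝ E]

private lemma ereal_mul_ne_bot_of_pos {c : ℝ} (hc : 0 < c) {u : EReal} (hu : u ≠ ⊥) :
    (c : EReal) * u ≠ ⊥ := by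
  induction u using EReal.rec with
  | bot => exact absurd rfl hu
  | coe s => rw [← EReal.coe_mul]; exact EReal.coe_ne_bot _
  | top => rw [EReal.coe_mul_top_of_pos hc]; exact top_ne_bot

private lemma ereal_coe_mul_add (t : ℝ) (ht : 0 ≤ t) (u : EReal) (hu : u ≠ ⊥) (v : ℝ) :
    (t : EReal) * (u + (v : EReal)) = (t : EReal) * u + ((t * v : ℝ) : EReal) := by
  induction u using EReal.rec with
  | bot => exact absurd rfl hu
  | coe s => norm_cast; ring
  | top =>
    rcases eq_or_lt_of_le ht with h | h
    · rw [← h]; norm_num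
    · have h1 : (⊤ : EReal) + (v : EReal) = ⊤ := EReal.top_add_of_ne_bot (EReal.coe_ne_bot _)
      have h2 : (t : EReal) * ⊤ = ⊤ := EReal.coe_mul_top_of_pos h
      rw [h1, h2, EReal.top_add_of_ne_bot (EReal.coe_ne_bot _)]

/-- Extending a lower semicontinuous function on a closed set by `⊤` gives a globally
lower semicontinuous function. -/
private lemma lsc_extend {K : Set E} (hK : IsClosed K) {f : E → EReal}
    (hf : LowerSemicontinuousOn f K) :
    LowerSemicontinuous (fun x => if x ∈ K then f x else (⊤ : EReal)) := by
  intro x y hy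
  by_cases hx : x ∈ K
  · simp only [hx, if_pos] at hy
    have h1 := hf x hx y hy
    rw [eventually_nhdsWithin_iff] at h1
    filter_upwards [h1] with z hz
    by_cases hzK : z ∈ K
    · simpa [hzK] using hz hzK
    · simp only [hzK, if_neg, not_false_iff]
      exact lt_of_lt_of_le hy le_top
  · have hev : ∀ᶠ z in nhds x, z ∈ Kᶜ := hK.isOpen_compl.eventually_mem hx
    simp only [hx, if_neg, not_false_iff] at hy
    filter_upwards [hev] with z hz
    simp only [mem_compl_iff] at hz
    simp only [hz, if_neg, not_false_iff]
    exact hy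

/-- A lower semicontinuous `EReal`-valued function attains its minimum on a
nonempty compact set. -/
private lemma lsc_exists_min {K : Set E} (hKcpt : IsCompact K) (hne : K.Nonempty)
    {f : E → EReal} (hf : LowerSemicontinuousOn f K) :
    ∃ x ∈ K, ∀ y ∈ K, f x ≤ f y := by
  have hFlsc : LowerSemicontinuous (fun x => if x ∈ K then f x else (⊤ : EReal)) :=
    lsc_extend hKcpt.isClosed hf
  set F : E → EReal := fun x => if x ∈ K then f x else ⊤ with hF
  have hFK : ∀ x ∈ K, F x = f x := fun x hx => if_pos hx
  have hne' : Nonempty K := hne.to_subtype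
  set S : K → Set E := fun i => K ∩ F ⁻¹' Iic (f i) with hS
  have hSx : ∀ (i : K) (x : E), x ∈ S i ↔ x ∈ K ∧ f x ≤ f i := by
    intro i x
    constructor
    · rintro ⟨hx, hx2⟩
      exact ⟨hx, by rwa [mem_preimage, mem_Iic, hFK x hx] at hx2⟩
    · rintro ⟨hx, hx2⟩
      exact ⟨hx, by rwa [mem_preimage, mem_Iic, hFK x hx]⟩
  have hcl : ∀ i, IsClosed (S i) := fun i => hKcpt.isClosed.inter (hFlsc.isClosed_preimage _)
  have hcpt : ∀ i, IsCompact (S i) := fun i => hKcpt.inter_right (hFlsc.isClosed_preimage _)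
  have hnon : ∀ i, (S i).Nonempty := fun i => ⟨i, (hSx i i).2 ⟨i.2, le_rfl⟩⟩
  have hdir : Directed (· ⊇ ·) S := by
    intro i j
    rcases le_total (f i) (f j) with hij | hij
    · refine ⟨i, subset_rfl, fun x hx => ?_⟩
      rcases (hSx i x).1 hx with ⟨h1, h2⟩
      exact (hSx j x).2 ⟨h1, h2.trans hij⟩
    · refine ⟨j, fun x hx => ?_, subset_rfl⟩
      rcases (hSx j x).1 hx with ⟨h1, h2⟩
      exact (hSx i x).2 ⟨h1, h2.trans hij⟩
  obtain ⟨x, hx⟩ :=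
    IsCompact.nonempty_iInter_of_directed_nonempty_isCompact_isClosed S hdir hnon hcpt hcl
  rw [mem_iInter] at hx
  have i₀ : K := hne'.some
  refine ⟨x, ((hSx i₀ x).1 (hx i₀)).1, fun y hy => ?_⟩
  exact ((hSx ⟨y, hy⟩ x).1 (hx ⟨y, hy⟩)).2

/-- Existence of a continuous affine minorant of a lower semicontinuous affine function,
exceeding any value below `f x₀` at `x₀`. -/
private lemma exists_minorant {K : Set E} (hKcpt : IsCompact K) (hKcvx : Convex ℝ K)
    {f : E → EReal} (hfbot : ∀ x ∈ K, f x ≠ ⊥)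
    (hflsc : LowerSemicontinuousOn f K)
    (hfaff : ∀ x ∈ K, ∀ y ∈ K, ∀ t : ℝ, 0 ≤ t → t ≤ 1 →
      f (t • x + (1 - t) • y) = (t : EReal) * f x + ((1 - t : ℝ) : EReal) * f y)
    {x₀ : E} (hx₀ : x₀ ∈ K) {r : ℝ} (hr : (r : EReal) < f x₀) :
    ∃ (φ : E →L[ℝ] ℝ) (c : ℝ),
      (∀ x ∈ K, ((φ x + c : ℝ) : EReal) ≤ f x) ∧ r < φ x₀ + c := by
  classical
  set C : Set (E × ℝ) := {p | p.1 ∈ K ∧ f p.1 ≤ (p.2 : EReal)} with hC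
  -- C is closed
  have hCclosed : IsClosed C := by
    have hFlsc : LowerSemicontinuous (fun x => if x ∈ K then f x else (⊤ : EReal)) :=
      lsc_extend hKcpt.isClosed hflsc
    have h2 : IsClosed {p : E × EReal | (if p.1 ∈ K then f p.1 else ⊤) ≤ p.2} :=
      lowerSemicontinuous_iff_isClosed_epigraph.1 hFlsc
    have h3 : Continuous (fun p : E × ℝ => (p.1, (p.2 : EReal))) :=
      continuous_fst.prodMk (continuous_coe_real_ereal.comp continuous_snd)
    have heq : C = (fun p : E × ℝ => (p.1, (p.2 : EReal))) ⁻¹'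
        {p : E × EReal | (if p.1 ∈ K then f p.1 else ⊤) ≤ p.2} := by
      ext ⟨x, t⟩
      simp only [hC, mem_setOf_eq, mem_preimage]
      constructor
      · rintro ⟨hxK, h⟩
        simpa [hxK] using h
      · intro h
        by_cases hxK : x ∈ K
        · exact ⟨hxK, by simpa [hxK] using h⟩
        · simp only [hxK, if_neg, not_false_iff] at h
          exact absurd (top_le_iff.1 h) (EReal.coe_ne_top t)
    rw [heq]
    exact h2.preimage h3
  -- C is convex
  have hCcvx : Convex ℝ C := by
    rintro ⟨x, s⟩ ⟨hxK, hxs⟩ ⟨y, t⟩ ⟨hyK, hyt⟩ a b ha hb hab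
    have hb' : b = 1 - a := by linarith
    subst hb'
    have hpt : a • ((x, s) : E × ℝ) + (1 - a) • ((y, t) : E × ℝ)
        = (a • x + (1 - a) • y, a * s + (1 - a) * t) := by
      simp [Prod.ext_iff, smul_eq_mul]
    rw [hpt]
    refine ⟨hKcvx hxK hyK ha hb (by ring), ?_⟩
    show f (a • x + (1 - a) • y) ≤ ((a * s + (1 - a) * t : ℝ) : EReal)
    rw [hfaff x hxK y hyK a ha (by linarith)]
    calc (a : EReal) * f x + ((1 - a : ℝ) : EReal) * f y
        ≤ (a : EReal) * (s : EReal) + ((1 - a : ℝ) : EReal) * (t : EReal) :=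
          add_le_add (mul_le_mul_of_nonneg_left hxs (by exact_mod_cast ha))
            (mul_le_mul_of_nonneg_left hyt (by exact_mod_cast hb))
      _ = ((a * s + (1 - a) * t : ℝ) : EReal) := by norm_cast
  -- decomposition of functionals on E × ℝ
  have hdec : ∀ (ℓ : (E × ℝ) →L[ℝ] ℝ) (x : E) (t : ℝ),
      ℓ (x, t) = ℓ (x, 0) + t * ℓ (0, 1) := by
    intro ℓ x t
    have h : ((x, t) : E × ℝ) = (x, (0 : ℝ)) + t • ((0 : E), (1 : ℝ)) := by
      simp [Prod.ext_iff]
    rw [h, map_add, map_smul, smul_eq_mul]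
  -- builder: from a separating functional with positive vertical component,
  -- construct the affine minorant
  have build : ∀ (ℓ : (E × ℝ) →L[ℝ] ℝ) (u : ℝ), (∀ p ∈ C, u < ℓ p) →
      0 < ℓ ((0 : E), (1 : ℝ)) →
      ∃ (φ : E →L[ℝ] ℝ) (c : ℝ), (∀ x ∈ K, ((φ x + c : ℝ) : EReal) ≤ f x) ∧
        ∀ (x : E) (t : ℝ), ℓ (x, t) < u → t < φ x + c := by
    intro ℓ u hu hpos
    set c₁ : ℝ := ℓ ((0 : E), (1 : ℝ)) with hc₁
    set L : E →L[ℝ] ℝ := ℓ.comp (ContinuousLinearMap.inl ℝ E ℝ) with hL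
    have hLx : ∀ x : E, L x = ℓ (x, 0) := fun x => rfl
    have happ : ∀ x : E, ((-(c₁⁻¹) • L) x) = -(c₁⁻¹) * L x := by
      intro x
      simp [ContinuousLinearMap.smul_apply, smul_eq_mul]
    refine ⟨-(c₁⁻¹) • L, u / c₁, ?_, ?_⟩
    · intro x hx
      by_cases hfx : f x = ⊤
      · rw [hfx]; exact le_top
      · have hTx : ((f x).toReal : EReal) = f x := EReal.coe_toReal hfx (hfbot x hx)
        have h2 := hu (x, (f x).toReal) ⟨hx, hTx.symm.le⟩
        rw [hdec ℓ, ← hLx, ← hc₁] at h2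
        rw [← hTx]
        apply EReal.coe_le_coe_iff.2
        rw [happ]
        have h3 : (u - L x) / c₁ < (f x).toReal := (div_lt_iff₀ hpos).2 (by linarith)
        have h4 : -(c₁⁻¹) * L x + u / c₁ = (u - L x) / c₁ := by
          field_simp
          ring
        linarith
    · intro x t hlt
      rw [hdec ℓ, ← hLx, ← hc₁] at hlt
      rw [happ]
      have h4 : t < (u - L x) / c₁ := (lt_div_iff₀ hpos).2 (by linarith)
      have h5 : -(c₁⁻¹) * L x + u / c₁ = (u - L x) / c₁ := by
        field_simp
        ring
      linarith
  -- the key case : f x₁ is finite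
  have key : ∀ x₁ ∈ K, f x₁ ≠ ⊤ → ∀ r₁ : ℝ, (r₁ : EReal) < f x₁ →
      ∃ (φ : E →L[ℝ] ℝ) (c : ℝ), (∀ x ∈ K, ((φ x + c : ℝ) : EReal) ≤ f x) ∧
        r₁ < φ x₁ + c := by
    intro x₁ hx₁ htop r₁ hr₁
    have hnot : ((x₁, r₁) : E × ℝ) ∉ C := fun h => absurd h.2 (not_le.2 hr₁)
    obtain ⟨ℓ, u, hu₁, hu₂⟩ := geometric_hahn_banach_point_closed hCcvx hCclosed hnot
    have hT : ((f x₁).toReal : EReal) = f x₁ := EReal.coe_toReal htop (hfbot x₁ hx₁)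
    have h1 : u < ℓ (x₁, (f x₁).toReal) := hu₂ _ ⟨hx₁, hT.symm.le⟩
    have h2 : ℓ (x₁, r₁) < u := hu₁
    have hrT : r₁ < (f x₁).toReal := by
      rw [← hT] at hr₁
      exact_mod_cast hr₁
    rw [hdec ℓ] at h1 h2
    have hpos : 0 < ℓ ((0 : E), (1 : ℝ)) := by nlinarith
    obtain ⟨φ, c, hmin, hlt⟩ := build ℓ u hu₂ hpos
    refine ⟨φ, c, hmin, hlt x₁ r₁ ?_⟩
    rw [hdec ℓ]
    linarith
  by_cases htop : f x₀ = ⊤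
  · by_cases hdom : ∃ x₁ ∈ K, f x₁ ≠ ⊤
    · obtain ⟨x₁, hx₁K, hx₁⟩ := hdom
      have hT₁ : ((f x₁).toReal : EReal) = f x₁ := EReal.coe_toReal hx₁ (hfbot x₁ hx₁K)
      obtain ⟨φ₀, c₀, hφ₀, -⟩ := key x₁ hx₁K hx₁ ((f x₁).toReal - 1)
        (by rw [← hT₁]; exact_mod_cast sub_one_lt _)
      have hnot : ((x₀, r) : E × ℝ) ∉ C := by
        rintro ⟨-, h⟩
        rw [htop] at h
        exact EReal.coe_ne_top r (top_le_iff.1 h)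
      obtain ⟨ℓ, u, hu₁, hu₂⟩ := geometric_hahn_banach_point_closed hCcvx hCclosed hnot
      set c₁ : ℝ := ℓ ((0 : E), (1 : ℝ)) with hc₁
      have hc₁nn : 0 ≤ c₁ := by
        by_contra hneg
        push_neg at hneg
        set T₁ := (f x₁).toReal with hT₁'
        set t := max T₁ ((u - ℓ (x₁, 0)) / c₁) with ht
        have hmem : ((x₁, t) : E × ℝ) ∈ C := by
          refine ⟨hx₁K, ?_⟩
          rw [← hT₁]
          exact_mod_cast le_max_left _ _
        have h1 := hu₂ _ hmem
        rw [hdec ℓ, ← hc₁] at h1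
        have h2 : (u - ℓ (x₁, 0)) / c₁ ≤ t := le_max_right _ _
        have h3 : t * c₁ ≤ ((u - ℓ (x₁, 0)) / c₁) * c₁ :=
          mul_le_mul_of_nonpos_right h2 hneg.le
        rw [div_mul_cancel₀ _ hneg.ne] at h3
        linarith
      rcases eq_or_lt_of_le hc₁nn with hc0 | hcpos
      · -- vertical component zero: translate an existing minorant
        have hLs : ∀ x ∈ K, f x ≠ ⊤ → u < ℓ (x, 0) := by
          intro x hx hfx
          have h := hu₂ (x, (f x).toReal)
            ⟨hx, (EReal.coe_toReal hfx (hfbot x hx)).symm.le⟩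
          rw [hdec ℓ, ← hc₁, ← hc0] at h
          linarith
        have hx₀lt : ℓ (x₀, 0) < u := by
          have h := hu₁
          rw [hdec ℓ, ← hc₁, ← hc0] at h
          linarith
        set L : E →L[ℝ] ℝ := ℓ.comp (ContinuousLinearMap.inl ℝ E ℝ) with hL
        have hLx : ∀ x : E, L x = ℓ (x, 0) := fun x => rfl
        set n : ℝ := max 0 ((r - (φ₀ x₀ + c₀)) / (u - L x₀) + 1) with hn
        have hn0 : 0 ≤ n := le_max_left _ _
        refine ⟨φ₀ - n • L, c₀ + n * u, ?_, ?_⟩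
        · intro x hx
          by_cases hfx : f x = ⊤
          · rw [hfx]; exact le_top
          · have h1 := hφ₀ x hx
            have h2 := hLs x hx hfx
            rw [← hLx] at h2
            calc (((φ₀ - n • L) x + (c₀ + n * u) : ℝ) : EReal)
                ≤ ((φ₀ x + c₀ : ℝ) : EReal) := by
                  apply EReal.coe_le_coe_iff.2
                  have happ : (φ₀ - n • L) x = φ₀ x - n * L x := by
                    simp [ContinuousLinearMap.sub_apply,
                      ContinuousLinearMap.smul_apply, smul_eq_mul]
                  rw [happ]
                  nlinarith
              _ ≤ f x := h1
        · have hpos : 0 < u - L x₀ := by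
            rw [hLx]; linarith
          have hn2 : (r - (φ₀ x₀ + c₀)) / (u - L x₀) + 1 ≤ n := le_max_right _ _
          have hdiv : (r - (φ₀ x₀ + c₀)) / (u - L x₀) * (u - L x₀)
              = r - (φ₀ x₀ + c₀) := div_mul_cancel₀ _ hpos.ne'
          have happ : (φ₀ - n • L) x₀ = φ₀ x₀ - n * L x₀ := by
            simp [ContinuousLinearMap.sub_apply,
              ContinuousLinearMap.smul_apply, smul_eq_mul]
          rw [happ]
          nlinarith
      · obtain ⟨φ, c, hmin, hlt⟩ := build ℓ u hu₂ hcpos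
        exact ⟨φ, c, hmin, hlt x₀ r hu₁⟩
    · push_neg at hdom
      refine ⟨0, r + 1, fun x hx => ?_, by simp⟩
      rw [hdom x hx]
      exact le_top
  · exact key x₀ hx₀ htop r hr

/-- Bauer's minimum principle for lsc affine `EReal`-valued functions. -/
private lemma bauer_min {K : Set E} (hKcpt : IsCompact K) (hKcvx : Convex ℝ K)
    (hne : K.Nonempty) {h : E → EReal} (hbot : ∀ x ∈ K, h x ≠ ⊥)
    (hlsc : LowerSemicontinuousOn h K)
    (haff : ∀ x ∈ K, ∀ y ∈ K, ∀ t : ℝ, 0 ≤ t → t ≤ 1 →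
      h (t • x + (1 - t) • y) = (t : EReal) * h x + ((1 - t : ℝ) : EReal) * h y) :
    ∃ z ∈ Set.extremePoints ℝ K, ∀ y ∈ K, h z ≤ h y := by
  obtain ⟨w, hwK, hwmin⟩ := lsc_exists_min hKcpt hne hlsc
  by_cases hm : h w = ⊤
  · obtain ⟨z, hz⟩ := hKcpt.extremePoints_nonempty hne
    refine ⟨z, hz, fun y hy => ?_⟩
    have : h y = ⊤ := top_le_iff.1 (hm ▸ hwmin y hy)
    rw [this]
    exact le_top
  · set m := h w with hmdef
    have hmbot : m ≠ ⊥ := hbot w hwK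
    set mr := m.toReal with hmr'
    have hmr : (mr : EReal) = m := EReal.coe_toReal hm hmbot
    set M := {x ∈ K | h x ≤ m} with hM
    have hMsub : M ⊆ K := fun x hx => hx.1
    have hMne : M.Nonempty := ⟨w, hwK, le_rfl⟩
    have hMclosed : IsClosed M := by
      have hFlsc : LowerSemicontinuous (fun x => if x ∈ K then h x else (⊤ : EReal)) :=
        lsc_extend hKcpt.isClosed hlsc
      have heq : M = K ∩ (fun x => if x ∈ K then h x else (⊤ : EReal)) ⁻¹' Iic m := by
        ext x
        simp only [hM, mem_setOf_eq, mem_inter_iff, mem_preimage, mem_Iic]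
        constructor
        · rintro ⟨hx, hhx⟩; exact ⟨hx, by simpa [hx] using hhx⟩
        · rintro ⟨hx, hhx⟩; exact ⟨hx, by simpa [hx] using hhx⟩
      rw [heq]
      exact hKcpt.isClosed.inter (hFlsc.isClosed_preimage m)
    have hMcpt : IsCompact M := hKcpt.of_isClosed_subset hMclosed hMsub
    have hMext : IsExtreme ℝ K M := by
      refine ⟨hMsub, fun x₁ hx₁ x₂ hx₂ z hzM hz => ?_⟩
      obtain ⟨a, b, ha, hb, hab, rfl⟩ := hz
      have hb' : b = 1 - a := by linarith
      subst hb'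
      have heq := haff x₁ hx₁ x₂ hx₂ a ha.le (by linarith)
      have hzle : h (a • x₁ + (1 - a) • x₂) ≤ m := hzM.2
      have h₁ := hwmin x₁ hx₁
      have h₂ := hwmin x₂ hx₂
      have hx₁top : h x₁ ≠ ⊤ := by
        intro htop
        rw [heq, htop] at hzle
        have e1 : ((a : ℝ) : EReal) * ⊤ = ⊤ := EReal.coe_mul_top_of_pos ha
        have e2 : ((1 - a : ℝ) : EReal) * h x₂ ≠ ⊥ :=
          ereal_mul_ne_bot_of_pos hb (hbot x₂ hx₂)
        rw [e1, EReal.top_add_of_ne_bot e2] at hzle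
        exact hm (top_le_iff.1 (hzle.trans (hwmin w hwK)))
      have hx₂top : h x₂ ≠ ⊤ := by
        intro htop
        rw [heq, htop] at hzle
        have e1 : ((1 - a : ℝ) : EReal) * ⊤ = ⊤ := EReal.coe_mul_top_of_pos hb
        have e2 : ((a : ℝ) : EReal) * h x₁ ≠ ⊥ :=
          ereal_mul_ne_bot_of_pos ha (hbot x₁ hx₁)
        rw [e1, EReal.add_top_of_ne_bot e2] at hzle
        exact hm (top_le_iff.1 (hzle.trans (hwmin w hwK)))
      set r₁ := (h x₁).toReal with hr₁'
      set r₂ := (h x₂).toReal with hr₂'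
      have hr₁ : (r₁ : EReal) = h x₁ := EReal.coe_toReal hx₁top (hbot x₁ hx₁)
      have hr₂ : (r₂ : EReal) = h x₂ := EReal.coe_toReal hx₂top (hbot x₂ hx₂)
      have hcomb : a * r₁ + (1 - a) * r₂ ≤ mr := by
        rw [heq, ← hr₁, ← hr₂, ← hmr] at hzle
        exact_mod_cast hzle
      have hm₁ : mr ≤ r₁ := by
        rw [← hmr, ← hr₁] at h₁
        exact_mod_cast h₁
      have hm₂ : mr ≤ r₂ := by
        rw [← hmr, ← hr₂] at h₂
        exact_mod_cast h₂
      refine (fun (hA : x₁ ∈ M) (_ : x₂ ∈ M) => hA) ?_ ?_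
      · refine ⟨hx₁, ?_⟩
        rw [← hr₁, ← hmr]
        have : r₁ ≤ mr := by nlinarith
        exact_mod_cast this
      · refine ⟨hx₂, ?_⟩
        rw [← hr₂, ← hmr]
        have : r₂ ≤ mr := by nlinarith
        exact_mod_cast this
    have hMcvx : Convex ℝ M := by
      rintro x ⟨hxK, hxm⟩ y ⟨hyK, hym⟩ a b ha hb hab
      have hb' : b = 1 - a := by linarith
      subst hb'
      refine ⟨hKcvx hxK hyK ha hb hab, ?_⟩
      calc h (a • x + (1 - a) • y)
          = (a : EReal) * h x + ((1 - a : ℝ) : EReal) * h y :=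
            haff x hxK y hyK a ha (by linarith)
        _ ≤ (a : EReal) * m + ((1 - a : ℝ) : EReal) * m :=
            add_le_add (mul_le_mul_of_nonneg_left hxm (by exact_mod_cast ha))
              (mul_le_mul_of_nonneg_left hym (by exact_mod_cast hb))
        _ = m := by
            rw [← hmr]
            norm_cast
            ring
    obtain ⟨z, hzM⟩ := hMcpt.extremePoints_nonempty hMne
    refine ⟨z, hMext.extremePoints_subset_extremePoints hzM, fun y hy => ?_⟩
    exact le_trans (extremePoints_subset hzM).2 (hwmin y hy)

end LaffAux

/-- If two lower semicontinuous affine functions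
`f, g : K → (-∞, ∞]` on a compact convex set satisfy `f ≤ g` on the extreme
points of `K`, then `f ≤ g` on all of `K`. -/
theorem laff_le_of_le_on_extremePoints {E : Type*} [AddCommGroup E] [Module ℝ E]
    [TopologicalSpace E] [IsTopologicalAddGroup E] [ContinuousSMul ℝ E]
    [T2Space E] [LocallyConvexSpace ℝ E]
    (K : Set E) (hKcpt : IsCompact K) (hKcvx : Convex ℝ K)
    (f g : E → EReal)
    (hfbot : ∀ x ∈ K, f x ≠ ⊥) (hgbot : ∀ x ∈ K, g x ≠ ⊥)
    (hflsc : LowerSemicontinuousOn f K) (hglsc : LowerSemicontinuousOn g K)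
    (hfaff : ∀ x ∈ K, ∀ y ∈ K, ∀ t : ℝ, 0 ≤ t → t ≤ 1 →
      f (t • x + (1 - t) • y) = (t : EReal) * f x + ((1 - t : ℝ) : EReal) * f y)
    (hgaff : ∀ x ∈ K, ∀ y ∈ K, ∀ t : ℝ, 0 ≤ t → t ≤ 1 →
      g (t • x + (1 - t) • y) = (t : EReal) * g x + ((1 - t : ℝ) : EReal) * g y)
    (hle : ∀ x ∈ Set.extremePoints ℝ K, f x ≤ g x) :
    ∀ x ∈ K, f x ≤ g x := by
  intro x₀ hx₀
  by_contra hcon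
  push_neg at hcon
  obtain ⟨r, hr₁, hr₂⟩ := EReal.exists_between_coe_real hcon
  obtain ⟨φ, c, hmin, hgt⟩ := exists_minorant hKcpt hKcvx hfbot hflsc hfaff hx₀ hr₂
  set a : E → ℝ := fun x => φ x + c with ha
  set h : E → EReal := fun x => g x + ((-(a x) : ℝ) : EReal) with hh
  have hha : ∀ x ∈ K, h x ≠ ⊥ := by
    intro x hx heq
    rcases EReal.add_eq_bot_iff.1 heq with h1 | h1
    · exact hgbot x hx h1
    · exact EReal.coe_ne_bot _ h1
  have hcont : Continuous fun x => ((-(a x) : ℝ) : EReal) := by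
    apply continuous_coe_real_ereal.comp
    exact (φ.continuous.add continuous_const).neg
  have hhlsc : LowerSemicontinuousOn h K := by
    apply LowerSemicontinuousOn.add' hglsc
      (hcont.lowerSemicontinuous.lowerSemicontinuousOn K)
    intro x _
    apply EReal.continuousAt_add
    · exact Or.inr (EReal.coe_ne_bot _)
    · exact Or.inr (EReal.coe_ne_top _)
  have hhaff : ∀ x ∈ K, ∀ y ∈ K, ∀ t : ℝ, 0 ≤ t → t ≤ 1 →
      h (t • x + (1 - t) • y) = (t : EReal) * h x + ((1 - t : ℝ) : EReal) * h y := by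
    intro x hx y hy t ht0 ht1
    have haK : a (t • x + (1 - t) • y) = t * a x + (1 - t) * a y := by
      simp only [ha, map_add, map_smul, smul_eq_mul]
      ring
    simp only [hh]
    rw [hgaff x hx y hy t ht0 ht1, haK,
      ereal_coe_mul_add t ht0 (g x) (hgbot x hx) (-(a x)),
      ereal_coe_mul_add (1 - t) (by linarith) (g y) (hgbot y hy) (-(a y))]
    have hring : (-(t * a x + (1 - t) * a y) : ℝ) = t * -(a x) + (1 - t) * -(a y) := by
      ring
    rw [hring, EReal.coe_add]
    abel
  obtain ⟨z, hzext, hzmin⟩ := bauer_min hKcpt hKcvx ⟨x₀, hx₀⟩ hha hhlsc hhaff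
  have hz0 : (0 : EReal) ≤ h z := by
    have h1 : ((a z : ℝ) : EReal) ≤ f z := hmin z (extremePoints_subset hzext)
    have h2 : f z ≤ g z := hle z hzext
    have h3 : ((a z : ℝ) : EReal) + ((-(a z) : ℝ) : EReal)
        ≤ g z + ((-(a z) : ℝ) : EReal) := add_le_add_left (h1.trans h2) _
    calc (0 : EReal) = ((a z : ℝ) : EReal) + ((-(a z) : ℝ) : EReal) := by
          rw [← EReal.coe_add]; norm_num
      _ ≤ h z := h3
  have hax₀ : ((a x₀ : ℝ) : EReal) ≤ g x₀ := by
    have h3 : (0 : EReal) ≤ h x₀ := hz0.trans (hzmin x₀ hx₀)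
    have h4 := add_le_add_left h3 ((a x₀ : ℝ) : EReal)
    rw [zero_add] at h4
    calc ((a x₀ : ℝ) : EReal) ≤ g x₀ + ((-(a x₀) : ℝ) : EReal) + ((a x₀ : ℝ) : EReal) := h4
      _ = g x₀ := by
          rw [add_assoc, ← EReal.coe_add]
          norm_num
  have hfin : (r : EReal) < g x₀ := lt_of_lt_of_le (by exact_mod_cast hgt) hax₀
  exact absurd hr₁ (not_lt.2 hfin.le)
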